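/- In the algebra U{ε} = k[[ε]][ε⁻¹][L] of logarithmic Laurent series (with ∂L = ε⁻¹), every element has a primitive with respect to ∂ = d/dε, and the kernel of ∂ is k; i.e. H⁰(U{ε}) = k and H¹(U{ε}) = 0. -/

import Mathlib

set_option synthInstance.maxHeartbeats 1000000
set_option linter.unusedSectionVars false
set_option maxHeartbeats 1000000

open Polynomial HahnSeries

section Aux
variable {k : Type*} [Field k] [CharZero k]

/-- Formal antiderivative of a Laurent series (ignoring the residue term). -/
noncomputable def LLanti (f : LaurentSeries k) : LaurentSeries k :=
  ⟨fun n => if n = 0 then 0 else (n : k)⁻¹ * f.coeff (n - 1), by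
    apply ((f.isPWO_support).image_of_monotone
      (f := fun n : ℤ => n + 1) (fun a b h => by simpa using h)).mono
    intro n hn
    simp only [Function.mem_support] at hn
    by_cases h0 : n = 0
    · exact absurd (by simp [h0]) hn
    · refine ⟨n - 1, ?_, by ring⟩
      rw [HahnSeries.mem_support]
      intro h; apply hn; simp [h]⟩

lemma LLanti_coeff (f : LaurentSeries k) (n : ℤ) :
    (LLanti f).coeff n = if n = 0 then 0 else (n : k)⁻¹ * f.coeff (n - 1) := rfl

variable (D₀ : Derivation k (LaurentSeries k) (LaurentSeries k))
  (hD₀ : ∀ (f : LaurentSeries k) (n : ℤ), (D₀ f).coeff n = (n + 1) • f.coeff (n + 1))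

include hD₀

lemma res_D₀ (f : LaurentSeries k) : (D₀ f).coeff (-1) = 0 := by
  rw [hD₀]; norm_num

lemma D₀_single_zero (c : k) : D₀ (single (0 : ℤ) c) = 0 := by
  ext n
  rw [hD₀]
  rcases eq_or_ne n (-1) with rfl | hn
  · norm_num
  · rw [coeff_single_of_ne (by omega)]
    simp

lemma D₀_LLanti (f : LaurentSeries k) (hf : f.coeff (-1) = 0) : D₀ (LLanti f) = f := by
  ext n
  rw [hD₀, LLanti_coeff]
  rcases eq_or_ne n (-1) with rfl | hn
  · simp [hf]
  · have h1 : n + 1 ≠ 0 := by omega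
    have h2 : ((n + 1 : ℤ) : k) ≠ 0 := Int.cast_ne_zero.mpr h1
    rw [if_neg h1, add_sub_cancel_right, zsmul_eq_mul]
    push_cast
    rw [mul_inv_cancel_left₀ (by push_cast at h2 ⊢; exact h2)]

lemma coeff_eq_zero_of_D₀ (f : LaurentSeries k) (hf : D₀ f = 0) {m : ℤ} (hm : m ≠ 0) :
    f.coeff m = 0 := by
  have h := hD₀ f (m - 1)
  rw [hf] at h
  simp only [HahnSeries.coeff_zero, sub_add_cancel] at h
  have := h.symm
  rcases smul_eq_zero.mp this with h' | h'
  · exact absurd h' hm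
  · exact h'

end Aux

section Poly
variable {k : Type*} [Field k] [CharZero k]
  (D₀ : Derivation k (LaurentSeries k) (LaurentSeries k))
  (D : Derivation k (Polynomial (LaurentSeries k)) (Polynomial (LaurentSeries k)))
  (hDC : ∀ f, D (Polynomial.C f) = Polynomial.C (D₀ f))
  (hDX : D Polynomial.X = Polynomial.C (HahnSeries.single (-1 : ℤ) (1 : k)))

include hDC hDX in
lemma coeff_D (u : Polynomial (LaurentSeries k)) (i : ℕ) :
    (D u).coeff i = D₀ (u.coeff i)
      + (((i : ℕ) + 1 : ℕ) : LaurentSeries k) * u.coeff (i + 1)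
          * HahnSeries.single (-1 : ℤ) (1 : k) := by
  induction u using Polynomial.induction_on' with
  | add p q hp hq =>
      rw [map_add, Polynomial.coeff_add, Polynomial.coeff_add, Polynomial.coeff_add, hp, hq, map_add]
      ring
  | monomial j a =>
      have hmono : D (Polynomial.C a * X ^ j) = Polynomial.C (D₀ a) * X ^ j
          + (j : Polynomial (LaurentSeries k))
            * (Polynomial.C (a * HahnSeries.single (-1 : ℤ) (1 : k)) * X ^ (j - 1)) := by
        rw [Derivation.leibniz, Derivation.leibniz_pow, hDC, hDX]
        simp only [smul_eq_mul, nsmul_eq_mul, map_mul]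
        ring
      rw [← C_mul_X_pow_eq_monomial, hmono]
      rw [Polynomial.coeff_add, coeff_C_mul, coeff_C_mul, coeff_C_mul, ← Polynomial.C_eq_natCast,
        coeff_C_mul, coeff_C_mul, coeff_X_pow, coeff_X_pow, coeff_X_pow]
      rcases eq_or_ne j i with rfl | hji
      · rw [if_neg (show ¬ j + 1 = j by omega)]
        rcases Nat.eq_zero_or_pos j with rfl | hj
        · simp
        · rw [if_neg (show ¬ j = j - 1 by omega)]
          simp
      · rcases eq_or_ne j (i + 1) with rfl | hji2
        · rw [if_pos (show i = i + 1 - 1 by omega), if_pos rfl,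
            if_neg (show ¬ i = i + 1 by omega)]
          simp only [mul_zero, map_zero, mul_one, zero_add, zero_mul, mul_zero]
          ring
        · rw [if_neg (show ¬ i = j - 1 by omega), if_neg (show ¬ i + 1 = j by omega),
            if_neg (show ¬ i = j by omega)]
          simp
end Poly

section Main
variable {k : Type*} [Field k] [CharZero k]

lemma res_term (n : ℕ) (x : LaurentSeries k) :
    (((n : ℕ) : LaurentSeries k) * x * HahnSeries.single (-1 : ℤ) (1 : k)).coeff (-1) =
      (n : k) * x.coeff 0 := by
  have h := HahnSeries.coeff_mul_single_add (x := ((n : ℕ) : LaurentSeries k) * x)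
    (r := (1 : k)) (a := (0 : ℤ)) (b := (-1 : ℤ))
  norm_num at h
  rw [h, ← map_natCast (HahnSeries.C : k →+* HahnSeries ℤ k) n, HahnSeries.C_apply,
    HahnSeries.coeff_single_zero_mul]

lemma natCast_single (n : ℕ) :
    ((n : ℕ) : LaurentSeries k) = HahnSeries.single (0 : ℤ) ((n : ℕ) : k) := by
  rw [← map_natCast (HahnSeries.C : k →+* HahnSeries ℤ k) n, HahnSeries.C_apply]

theorem llsc_aux {k : Type*} [Field k] [CharZero k]
    (D₀ : Derivation k (LaurentSeries k) (LaurentSeries k))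
    (hD₀ : ∀ (f : LaurentSeries k) (n : ℤ), (D₀ f).coeff n = (n + 1) • f.coeff (n + 1))
    (D : Derivation k (Polynomial (LaurentSeries k)) (Polynomial (LaurentSeries k)))
    (hDC : ∀ f, D (Polynomial.C f) = Polynomial.C (D₀ f))
    (hDX : D Polynomial.X = Polynomial.C (HahnSeries.single (-1 : ℤ) (1 : k))) :
    (∀ u, D u = 0 → ∃ c : k, algebraMap k (Polynomial (LaurentSeries k)) c = u) ∧
    (∀ u, ∃ v, D v = u) := by
  constructor
  · -- kernel
    intro u hu
    by_cases h0 : u = 0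
    · exact ⟨0, by simp [h0]⟩
    have key : ∀ i : ℕ, D₀ (u.coeff i)
        + (((i : ℕ) + 1 : ℕ) : LaurentSeries k) * u.coeff (i + 1)
          * HahnSeries.single (-1 : ℤ) (1 : k) = 0 := by
      intro i
      rw [← coeff_D D₀ D hDC hDX u i, hu, Polynomial.coeff_zero]
    have hres : ∀ i : ℕ, ((i + 1 : ℕ) : k) * (u.coeff (i + 1)).coeff 0 = 0 := by
      intro i
      have h := congrArg (fun f : LaurentSeries k => f.coeff (-1)) (key i)
      simp only [HahnSeries.coeff_add, HahnSeries.coeff_zero] at h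
      rw [res_D₀ D₀ hD₀, res_term, zero_add] at h
      exact h
    have hdeg : u.natDegree = 0 := by
      by_contra hn
      have hn1 : 1 ≤ u.natDegree := Nat.one_le_iff_ne_zero.mpr hn
      have htop : D₀ (u.coeff u.natDegree) = 0 := by
        have h := key u.natDegree
        rw [Polynomial.coeff_eq_zero_of_natDegree_lt (lt_add_one u.natDegree)] at h
        simpa using h
      have hzero : u.coeff u.natDegree = 0 := by
        ext m
        rcases eq_or_ne m 0 with rfl | hm
        · have h := hres (u.natDegree - 1)
          rw [Nat.sub_add_cancel hn1] at h
          have hcast : ((u.natDegree : ℕ) : k) ≠ 0 := Nat.cast_ne_zero.mpr hn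
          simpa [hcast] using mul_eq_zero.mp h
        · simpa using coeff_eq_zero_of_D₀ D₀ hD₀ _ htop hm
      exact (Polynomial.leadingCoeff_ne_zero.mpr h0) hzero
    have hD0a : D₀ (u.coeff 0) = 0 := by
      have h := key 0
      rw [Polynomial.coeff_eq_zero_of_natDegree_lt (n := 0 + 1) (by omega)] at h
      simpa using h
    refine ⟨(u.coeff 0).coeff 0, ?_⟩
    have hsingle : u.coeff 0 = HahnSeries.single (0 : ℤ) ((u.coeff 0).coeff 0) := by
      ext m
      rcases eq_or_ne m 0 with rfl | hm
      · simp
      · rw [HahnSeries.coeff_single_of_ne hm]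
        exact coeff_eq_zero_of_D₀ D₀ hD₀ _ hD0a hm
    have hmap : algebraMap k (LaurentSeries k) ((u.coeff 0).coeff 0)
        = HahnSeries.single (0 : ℤ) ((u.coeff 0).coeff 0) := by
      rw [HahnSeries.algebraMap_apply', PowerSeries.algebraMap_apply,
        Algebra.algebraMap_self_apply, HahnSeries.ofPowerSeries_C, HahnSeries.C_apply]
    rw [Polynomial.algebraMap_apply, hmap, ← hsingle,
      ← Polynomial.eq_C_of_natDegree_eq_zero hdeg]
  · -- surjectivity
    suffices h : ∀ N : ℕ, ∀ u : Polynomial (LaurentSeries k), u.degree < N → ∃ v, D v = u by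
      intro u
      exact h (u.natDegree + 1) u
        (lt_of_le_of_lt Polynomial.degree_le_natDegree (by exact_mod_cast lt_add_one _))
    intro N
    induction N with
    | zero =>
        intro u hu
        rw [Nat.cast_zero, Nat.WithBot.lt_zero_iff, Polynomial.degree_eq_bot] at hu
        exact ⟨0, by simp [hu]⟩
    | succ N ih =>
        intro u hu
        by_cases h0 : u = 0
        · exact ⟨0, by simp [h0]⟩
        have hnN : u.natDegree ≤ N := by
          have := (Polynomial.natDegree_lt_iff_degree_lt h0).mpr (by exact_mod_cast hu)
          omega
        set n := u.natDegree with hn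
        set b := u.coeff n with hb
        set r := b.coeff (-1) with hr
        set c : k := ((n : k) + 1)⁻¹ * r with hc
        set g : LaurentSeries k := LLanti (b - HahnSeries.single (-1 : ℤ) r) with hgdef
        have hcne : ((n : k) + 1) ≠ 0 := by
          exact_mod_cast (Nat.cast_add_one_ne_zero (R := k) n)
        have hg : D₀ g = b - HahnSeries.single (-1 : ℤ) r := by
          apply D₀_LLanti D₀ hD₀
          simp [HahnSeries.coeff_sub, hr]
        set w : Polynomial (LaurentSeries k) :=
          Polynomial.C (HahnSeries.single (0 : ℤ) c) * Polynomial.X ^ (n + 1)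
            + Polynomial.C g * Polynomial.X ^ n with hw
        have hwc : ∀ m : ℕ, w.coeff m =
            (if m = n + 1 then HahnSeries.single (0 : ℤ) c else 0)
              + (if m = n then g else 0) := by
          intro m
          rw [hw, Polynomial.coeff_add, Polynomial.coeff_C_mul, Polynomial.coeff_C_mul,
            Polynomial.coeff_X_pow, Polynomial.coeff_X_pow]
          simp [mul_ite]
        have hkey : ∀ m : ℕ, n ≤ m → (u - D w).coeff m = 0 := by
          intro m hm
          rw [Polynomial.coeff_sub, coeff_D D₀ D hDC hDX]
          rcases eq_or_ne m n with rfl | hmn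
          · rw [hwc n, hwc (n + 1), if_neg (by omega), if_pos rfl, if_pos rfl,
              if_neg (by omega), zero_add, add_zero, hg]
            rw [natCast_single, HahnSeries.single_mul_single, HahnSeries.single_mul_single]
            have : ((n + 1 : ℕ) : k) * c * 1 = r := by
              rw [hc, mul_one]
              push_cast
              field_simp
            rw [this]
            simp [hb]
          · have hm1 : n + 1 ≤ m := by omega
            rw [hwc m, hwc (m + 1)]
            rcases eq_or_ne m (n + 1) with rfl | hmn1
            · rw [if_pos rfl, if_neg hmn, if_neg (by omega), if_neg (by omega),
                add_zero, zero_add, D₀_single_zero D₀ hD₀,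
                Polynomial.coeff_eq_zero_of_natDegree_lt (by omega)]
              simp
            · rw [if_neg hmn1, if_neg hmn, if_neg (by omega), if_neg (by omega),
                Polynomial.coeff_eq_zero_of_natDegree_lt (by omega)]
              simp
        have hdlt : (u - D w).degree < (n : WithBot ℕ) :=
          (Polynomial.degree_lt_iff_coeff_zero _ _).mpr hkey
        obtain ⟨v', hv'⟩ := ih (u - D w)
          (lt_of_lt_of_le hdlt (by exact_mod_cast hnN))
        exact ⟨v' + w, by rw [map_add, hv']; ring⟩

end Main

/-- In the algebra `U{ε} = k[[ε]][ε⁻¹][L]` of logarithmic Laurent series (with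
`∂L = ε⁻¹`), the kernel of `∂` is `k` and every element has a primitive:
`H⁰(U{ε}) = k` and `H¹(U{ε}) = 0`. Here `U{ε}` is modelled as the polynomial
ring in the formal logarithm `X = L_ε` over the field of formal Laurent
series, and `∂` is any derivation acting coefficientwise as `d/dε` and sending
`L_ε` to `ε⁻¹`. -/
theorem logarithmic_laurent_series_cohomology {k : Type*} [Field k] [CharZero k]
    (D₀ : Derivation k (LaurentSeries k) (LaurentSeries k))
    (hD₀ : ∀ (f : LaurentSeries k) (n : ℤ), (D₀ f).coeff n = (n + 1) • f.coeff (n + 1))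
    (D : Derivation k (Polynomial (LaurentSeries k)) (Polynomial (LaurentSeries k)))
    (hDC : ∀ f, D (Polynomial.C f) = Polynomial.C (D₀ f))
    (hDX : D Polynomial.X = Polynomial.C (HahnSeries.single (-1 : ℤ) (1 : k))) :
    (∀ u, D u = 0 → ∃ c : k, algebraMap k (Polynomial (LaurentSeries k)) c = u) ∧
    (∀ u, ∃ v, D v = u) := by
  exact llsc_aux D₀ hD₀ D hDC hDX
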